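/- For every finite simple graph G, |I(G;−1)| ≤ 2^{ν(G)}, where ν(G) = |E(G)| − |V(G)| + p is the cyclomatic number of G and p is the number of connected components of G. -/

import Mathlib

open Classical in
/-- The independence polynomial of a finite simple graph: the coefficient of `x^k`
is the number of independent sets of cardinality `k`. -/
noncomputable def indepPoly {V : Type*} [Fintype V] (G : SimpleGraph V) : Polynomial ℤ :=
  ∑ s ∈ Finset.univ.filter
      (fun s : Finset V => ∀ v ∈ s, ∀ w ∈ s, v ≠ w → ¬ G.Adj v w),
    Polynomial.X ^ s.card

open scoped Classical

set_option linter.unusedSectionVars false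
set_option linter.unusedVariables false
set_option linter.unreachableTactic false
set_option linter.unusedTactic false

namespace Eng

open Finset SimpleGraph

variable {V : Type*} [Fintype V] (G : SimpleGraph V)

/-! ### Basic definitions relative to a vertex subset `A` -/

noncomputable def deg (A : Finset V) (v : V) : ℕ := (A.filter (G.Adj v)).card

noncomputable def msum (A : Finset V) : ℕ := ∑ u ∈ A, deg G A u

noncomputable def comps (A : Finset V) : ℕ :=
  Nat.card (G.induce (A : Set V)).ConnectedComponent

noncomputable def esum (A : Finset V) : ℕ := (G.induce (A : Set V)).edgeFinset.card

noncomputable def nu (A : Finset V) : ℕ := esum G A + comps G A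

def Ind (s : Finset V) : Prop := ∀ v ∈ s, ∀ w ∈ s, v ≠ w → ¬ G.Adj v w

noncomputable def F (A : Finset V) : ℤ := ∑ s ∈ A.powerset.filter (Ind G), (-1) ^ s.card

def Conn (A : Finset V) (x y : V) : Prop := ∃ p : G.Walk x y, ∀ z ∈ p.support, z ∈ A

lemma Ind.subset {s t : Finset V} (h : Ind G s) (hts : t ⊆ s) : Ind G t :=
  fun v hv w hw hvw => h v (hts hv) w (hts hw) hvw

/-! ### The recursion for `F` -/

lemma F_empty : F G ∅ = 1 := by
  rw [F, Finset.powerset_empty, Finset.filter_singleton]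
  simp [Ind]

lemma F_rec {A : Finset V} {v : V} (hv : v ∈ A) :
    F G A = F G (A.erase v) - F G ((A.erase v).filter (fun w => ¬ G.Adj v w)) := by
  classical
  set B := (A.erase v).filter (fun w => ¬ G.Adj v w) with hB
  rw [F, ← Finset.sum_filter_add_sum_filter_not (A.powerset.filter (Ind G)) (fun s => v ∈ s)]
  have h2 : (A.powerset.filter (Ind G)).filter (fun s => ¬ v ∈ s)
      = (A.erase v).powerset.filter (Ind G) := by
    ext s
    simp only [Finset.mem_filter, Finset.mem_powerset, Finset.subset_erase]
    tauto
  have h1 : ∑ s ∈ (A.powerset.filter (Ind G)).filter (fun s => v ∈ s), ((-1 : ℤ)) ^ s.card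
      = ∑ t ∈ B.powerset.filter (Ind G), (-((-1 : ℤ) ^ t.card)) := by
    refine Finset.sum_bij' (fun s _ => s.erase v) (fun t _ => insert v t) ?h1 ?h2 ?h3 ?h4 ?h5
    case h1 =>
      intro s hs
      simp only [Finset.mem_filter, Finset.mem_powerset] at hs ⊢
      obtain ⟨⟨hsA, hInd⟩, hvs⟩ := hs
      refine ⟨?_, hInd.subset G (Finset.erase_subset _ _)⟩
      intro w hw
      rw [Finset.mem_erase] at hw
      rw [hB, Finset.mem_filter, Finset.mem_erase]
      exact ⟨⟨hw.1, hsA hw.2⟩, hInd v hvs w hw.2 (Ne.symm hw.1)⟩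
    case h2 =>
      intro t ht
      simp only [Finset.mem_filter, Finset.mem_powerset] at ht ⊢
      obtain ⟨htB, hInd⟩ := ht
      have htA : t ⊆ A.erase v := fun w hw => (Finset.mem_filter.1 (htB hw)).1
      have htv : v ∉ t := fun hvt => (Finset.mem_erase.1 (htA hvt)).1 rfl
      have hnadj : ∀ w ∈ t, ¬ G.Adj v w := fun w hw => (Finset.mem_filter.1 (htB hw)).2
      refine ⟨⟨Finset.insert_subset hv (fun w hw => (Finset.mem_erase.1 (htA hw)).2), ?_⟩,
        Finset.mem_insert_self _ _⟩
      intro x hx y hy hxy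
      rcases Finset.mem_insert.1 hx with hx' | hx'
      · subst hx'
        rcases Finset.mem_insert.1 hy with hy' | hy'
        · exact absurd hy'.symm hxy
        · exact hnadj y hy'
      · rcases Finset.mem_insert.1 hy with hy' | hy'
        · subst hy'
          exact fun hadj => hnadj x hx' hadj.symm
        · exact hInd x hx' y hy' hxy
    case h3 =>
      intro s hs
      exact Finset.insert_erase (Finset.mem_filter.1 hs).2
    case h4 =>
      intro t ht
      apply Finset.erase_insert
      intro hvt
      have htB : t ⊆ B := Finset.mem_powerset.1 (Finset.mem_filter.1 ht).1
      exact (Finset.mem_erase.1 (Finset.mem_filter.1 (htB hvt)).1).1 rfl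
    case h5 =>
      intro s hs
      have hvs : v ∈ s := (Finset.mem_filter.1 hs).2
      have hc : (s.erase v).card + 1 = s.card := Finset.card_erase_add_one hvs
      rw [← hc, pow_succ]
      ring
  rw [h1, h2, Finset.sum_neg_distrib]
  rw [F, F]
  ring

lemma F_isolated {A : Finset V} {v : V} (hv : v ∈ A) (h : A.filter (G.Adj v) = ∅) :
    F G A = 0 := by
  rw [F_rec G hv]
  have heq : (A.erase v).filter (fun w => ¬ G.Adj v w) = A.erase v := by
    apply Finset.filter_true_of_mem
    intro w hw hadj
    have : w ∈ A.filter (G.Adj v) := Finset.mem_filter.2 ⟨(Finset.mem_erase.1 hw).2, hadj⟩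
    simp [h] at this
  rw [heq]
  ring

lemma F_pendant {A : Finset V} {v u : V} (hv : v ∈ A) (hu : A.filter (G.Adj v) = {u}) :
    F G A = - F G ((A.erase u).filter (fun w => ¬ G.Adj u w)) := by
  have humem : u ∈ A.filter (G.Adj v) := by rw [hu]; exact Finset.mem_singleton_self u
  have huA : u ∈ A := (Finset.mem_filter.1 humem).1
  have hadj : G.Adj v u := (Finset.mem_filter.1 humem).2
  have hvu : v ≠ u := G.ne_of_adj hadj
  rw [F_rec G huA]
  have hiso : F G (A.erase u) = 0 := by
    apply F_isolated G (v := v) (Finset.mem_erase.2 ⟨hvu, hv⟩)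
    rw [Finset.filter_erase, hu]
    simp
  rw [hiso]
  ring

/-! ### Walks confined to a vertex subset -/

lemma conn_iff {A : Finset V} {x y : V} (hx : x ∈ A) (hy : y ∈ A) :
    Conn G A x y ↔ (G.induce (A : Set V)).Reachable ⟨x, hx⟩ ⟨y, hy⟩ := by
  constructor
  · rintro ⟨p, hp⟩
    have hc := p.connected_induce_support
    have hsub : {z | z ∈ p.support} ⊆ (A : Set V) := fun z hz => hp z hz
    have hr : (G.induce {z | z ∈ p.support}).Reachable
        ⟨x, p.start_mem_support⟩ ⟨y, p.end_mem_support⟩ := hc.preconnected _ _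
    have := hr.map (G.induceHomOfLE hsub).toHom
    convert this using 2
    all_goals rfl
  · rintro ⟨p⟩
    refine ⟨p.map (SimpleGraph.Embedding.induce (A : Set V)).toHom, ?_⟩
    intro z hz
    replace hz : z ∈ (p.map (SimpleGraph.Embedding.induce (A : Set V)).toHom).support := hz
    rw [SimpleGraph.Walk.support_map, List.mem_map] at hz
    obtain ⟨a, _, rfl⟩ := hz
    exact a.2

lemma conn_trans {A : Finset V} {x y z : V} (h1 : Conn G A x y) (h2 : Conn G A y z) :
    Conn G A x z := by
  obtain ⟨p, hp⟩ := h1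
  obtain ⟨q, hq⟩ := h2
  refine ⟨p.append q, ?_⟩
  intro w hw
  rw [SimpleGraph.Walk.support_append] at hw
  rcases List.mem_append.1 hw with h | h
  · exact hp w h
  · exact hq w (List.mem_of_mem_tail h)

lemma conn_symm {A : Finset V} {x y : V} (h : Conn G A x y) : Conn G A y x := by
  obtain ⟨p, hp⟩ := h
  refine ⟨p.reverse, ?_⟩
  intro w hw
  rw [SimpleGraph.Walk.support_reverse, List.mem_reverse] at hw
  exact hp w hw

lemma step {A : Finset V} {v x : V} (hv : v ∈ A) (hx : x ∈ A) (hxv : x ≠ v)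
    (h : Conn G A x v) :
    ∃ u ∈ A.filter (G.Adj v), Conn G (A.erase v) x u := by
  obtain ⟨p, hp⟩ := h
  obtain ⟨p₂, hp₂path, hp₂sup⟩ : ∃ p₂ : G.Walk v x, p₂.IsPath ∧ ∀ z ∈ p₂.support, z ∈ A := by
    refine ⟨(p.reverse.toPath : G.Walk v x), (p.reverse.toPath).2, ?_⟩
    intro z hz
    have := SimpleGraph.Walk.support_toPath_subset p.reverse hz
    rw [SimpleGraph.Walk.support_reverse, List.mem_reverse] at this
    exact hp z this
  cases p₂ with
  | nil => exact absurd rfl hxv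
  | cons hadj q =>
    rename_i b
    rw [SimpleGraph.Walk.cons_isPath_iff] at hp₂path
    have hqA : ∀ z ∈ q.support, z ∈ A := by
      intro z hz
      exact hp₂sup z (by rw [SimpleGraph.Walk.support_cons]; exact List.mem_cons_of_mem _ hz)
    have hbA : b ∈ A := hqA b q.start_mem_support
    refine ⟨b, Finset.mem_filter.2 ⟨hbA, hadj⟩, ⟨q.reverse, ?_⟩⟩
    intro z hz
    rw [SimpleGraph.Walk.support_reverse, List.mem_reverse] at hz
    exact Finset.mem_erase.2 ⟨fun hzv => hp₂path.2 (hzv ▸ hz), hqA z hz⟩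

/-! ### Counting connected components under vertex deletion -/

lemma comps_le {A : Finset V} {v : V} (hv : v ∈ A) (N : Finset V)
    (hN : ∀ u ∈ N, u ∈ A.erase v)
    (hfib : ∀ x, x ∈ A.erase v → Conn G A x v → ∃ u ∈ N, Conn G (A.erase v) x u) :
    comps G (A.erase v) + 1 ≤ comps G A + N.card := by
  classical
  set A' := A.erase v with hA'
  have hsub : ((A' : Set V)) ⊆ (A : Set V) := by
    intro z hz
    exact Finset.mem_coe.2 (Finset.mem_of_mem_erase (Finset.mem_coe.1 hz))
  set H := G.induce (A' : Set V) with hH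
  set K := G.induce (A : Set V) with hK
  haveI : Fintype K.ConnectedComponent := Fintype.ofFinite _
  haveI : Fintype H.ConnectedComponent := Fintype.ofFinite _
  let ι := G.induceHomOfLE hsub
  let Φ : H.ConnectedComponent → K.ConnectedComponent :=
    SimpleGraph.ConnectedComponent.map ι.toHom
  let cv : K.ConnectedComponent := K.connectedComponentMk ⟨v, hv⟩
  have hmemA : ∀ x : (A' : Set V), (x : V) ∈ A := fun x =>
    Finset.mem_of_mem_erase (Finset.mem_coe.1 x.2)
  have hmemA' : ∀ x : (A' : Set V), (x : V) ∈ A' := fun x => Finset.mem_coe.1 x.2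
  have hPhi_mk : ∀ x : (A' : Set V),
      Φ (H.connectedComponentMk x) = K.connectedComponentMk ⟨(x : V), hmemA x⟩ := by
    intro x
    simp only [Φ, SimpleGraph.ConnectedComponent.map_mk]
    congr 1
  have hout : ∀ D : H.ConnectedComponent, H.connectedComponentMk D.out = D :=
    fun D => D.out_eq
  have key : ∀ D : H.ConnectedComponent, Φ D = cv →
      ∃ u : {u // u ∈ N}, D = H.connectedComponentMk
        ⟨(u : V), Finset.mem_coe.2 (hN u.1 u.2)⟩ := by
    intro D hD
    set x := D.out with hx
    have hxA' : (x : V) ∈ A' := hmemA' x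
    have h1 : K.connectedComponentMk ⟨(x : V), hmemA x⟩ = cv := by
      rw [← hPhi_mk x, hout D] at *
      exact hD
    have h2 : Conn G A (x : V) v := by
      rw [conn_iff G (hmemA x) hv]
      exact SimpleGraph.ConnectedComponent.eq.1 h1
    obtain ⟨u, huN, hconn⟩ := hfib (x : V) hxA' h2
    refine ⟨⟨u, huN⟩, ?_⟩
    have : H.Reachable x ⟨u, Finset.mem_coe.2 (hN u huN)⟩ := by
      have hr := (conn_iff G (A := A') (hmemA' x) (hN u huN)).1 hconn
      convert hr using 2
    rw [← hout D]
    exact SimpleGraph.ConnectedComponent.eq.2 this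
  have inj1 : ∀ D₁ D₂ : H.ConnectedComponent, Φ D₁ = Φ D₂ → Φ D₁ ≠ cv → D₁ = D₂ := by
    intro D₁ D₂ heq hne
    set x₁ := D₁.out with hx1
    set x₂ := D₂.out with hx2
    have h1 : K.Reachable ⟨(x₁ : V), hmemA x₁⟩ ⟨(x₂ : V), hmemA x₂⟩ := by
      apply SimpleGraph.ConnectedComponent.eq.1
      rw [← hPhi_mk x₁, ← hPhi_mk x₂, hout, hout]
      exact heq
    have h2 : Conn G A (x₁ : V) (x₂ : V) := (conn_iff G _ _).2 h1
    obtain ⟨p, hp⟩ := h2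
    have hvp : v ∉ p.support := by
      intro hvmem
      apply hne
      have hconn : Conn G A (x₁ : V) v :=
        ⟨p.takeUntil v hvmem, fun z hz => hp z (SimpleGraph.Walk.support_takeUntil_subset _ _ hz)⟩
      have : K.Reachable ⟨(x₁ : V), hmemA x₁⟩ ⟨v, hv⟩ := (conn_iff G _ _).1 hconn
      rw [← hout D₁, hPhi_mk x₁]
      exact SimpleGraph.ConnectedComponent.eq.2 this
    have hconn' : Conn G A' (x₁ : V) (x₂ : V) := by
      refine ⟨p, fun z hz => Finset.mem_erase.2 ⟨?_, hp z hz⟩⟩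
      intro hzv
      exact hvp (hzv ▸ hz)
    have : H.Reachable x₁ x₂ := by
      have hr := (conn_iff G (hmemA' x₁) (hmemA' x₂)).1 hconn'
      convert hr using 2
    rw [← hout D₁, ← hout D₂]
    exact SimpleGraph.ConnectedComponent.eq.2 this
  let f : H.ConnectedComponent → {C : K.ConnectedComponent // C ≠ cv} ⊕ {u // u ∈ N} :=
    fun D => if h : Φ D = cv then Sum.inr (Classical.choose (key D h)) else Sum.inl ⟨Φ D, h⟩
  have hfinj : Function.Injective f := by
    intro D₁ D₂ hf
    by_cases h1 : Φ D₁ = cv <;> by_cases h2 : Φ D₂ = cv <;>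
      simp only [f, h1, h2, dif_pos, dif_neg, not_false_iff] at hf
    · have e1 := Classical.choose_spec (key D₁ h1)
      have e2 := Classical.choose_spec (key D₂ h2)
      rw [e1, e2, Sum.inr.inj hf]
    · cases hf
    · cases hf
    · exact inj1 D₁ D₂ (congrArg Subtype.val (Sum.inl.inj hf)) h1
  have hcard := Fintype.card_le_of_injective f hfinj
  rw [Fintype.card_sum, Fintype.card_coe] at hcard
  have h1 : Fintype.card {C : K.ConnectedComponent // C ≠ cv} + 1
      = Fintype.card K.ConnectedComponent := by
    rw [Fintype.card_subtype_compl (· = cv)]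
    have hone : Fintype.card {C : K.ConnectedComponent // C = cv} = 1 :=
      Fintype.card_subtype_eq cv
    rw [hone]
    have hpos : 0 < Fintype.card K.ConnectedComponent := Fintype.card_pos_iff.2 ⟨cv⟩
    omega
  have e1 : comps G A' = Fintype.card H.ConnectedComponent := Nat.card_eq_fintype_card
  have e2 : comps G A = Fintype.card K.ConnectedComponent := Nat.card_eq_fintype_card
  rw [e1, e2, ← h1]
  omega

/-! ### Edge counting -/

lemma msum_erase {A : Finset V} {v : V} (hv : v ∈ A) :
    msum G (A.erase v) + 2 * deg G A v = msum G A := by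
  classical
  have hstep : ∀ u, deg G (A.erase v) u + (if G.Adj u v then 1 else 0) = deg G A u := by
    intro u
    rw [deg, deg, Finset.filter_erase]
    by_cases h : G.Adj u v
    · rw [if_pos h]
      exact Finset.card_erase_add_one (Finset.mem_filter.2 ⟨hv, h⟩)
    · rw [if_neg h, add_zero, Finset.erase_eq_of_notMem]
      intro hmem
      exact h (Finset.mem_filter.1 hmem).2
  have h1 : msum G A = deg G A v + ∑ u ∈ A.erase v, deg G A u :=
    (Finset.add_sum_erase A _ hv).symm
  have h2 : ∑ u ∈ A.erase v, deg G A u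
      = msum G (A.erase v) + ∑ u ∈ A.erase v, (if G.Adj u v then 1 else 0) := by
    rw [msum, ← Finset.sum_add_distrib]
    exact Finset.sum_congr rfl (fun u hu => (hstep u).symm)
  have h3 : ∑ u ∈ A.erase v, (if G.Adj u v then 1 else 0) = deg G A v := by
    rw [← Finset.card_filter, deg]
    congr 1
    ext u
    simp only [Finset.mem_filter, Finset.mem_erase]
    constructor
    · rintro ⟨⟨hne, hA⟩, hadj⟩
      exact ⟨hA, hadj.symm⟩
    · rintro ⟨hA, hadj⟩
      exact ⟨⟨fun h => G.irrefl (h ▸ hadj), hA⟩, hadj.symm⟩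
  rw [h1, h2, h3]
  ring

lemma deg_coe {A : Finset V} (x : (A : Set V)) :
    (G.induce (A : Set V)).degree x = deg G A (x : V) := by
  classical
  rw [deg, SimpleGraph.degree]
  refine Finset.card_bij
    (fun (y : ↑(A : Set V)) (_ : y ∈ (G.induce (A : Set V)).neighborFinset x) => (y : V))
    ?_ ?_ ?_
  · intro y hy
    rw [SimpleGraph.mem_neighborFinset] at hy
    simp only [SimpleGraph.comap_adj, Function.Embedding.coe_subtype] at hy
    exact Finset.mem_filter.2 ⟨Finset.mem_coe.1 y.2, hy⟩
  · intro y1 h1 y2 h2 h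
    exact Subtype.ext h
  · intro u hu
    refine ⟨⟨u, Finset.mem_coe.2 (Finset.mem_filter.1 hu).1⟩, ?_, rfl⟩
    rw [SimpleGraph.mem_neighborFinset]
    simp only [SimpleGraph.comap_adj, Function.Embedding.coe_subtype]
    exact (Finset.mem_filter.1 hu).2

lemma msum_eq (A : Finset V) : msum G A = 2 * esum G A := by
  classical
  rw [esum, ← SimpleGraph.sum_degrees_eq_twice_card_edges, msum]
  rw [← Finset.sum_coe_sort A (fun u => deg G A u)]
  exact Fintype.sum_equiv (Equiv.subtypeEquivRight (fun x => Finset.mem_coe.symm))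
    (fun x : {x // x ∈ A} => deg G A ↑x)
    (fun x : (A : Set V) => (G.induce (A : Set V)).degree x)
    (fun x => (deg_coe G _).symm)

/-! ### Deletion inequalities for the cyclomatic quantity -/

lemma nu_del1 {A : Finset V} {v : V} (hv : v ∈ A) : nu G (A.erase v) + 1 ≤ nu G A := by
  classical
  have hcomp : comps G (A.erase v) + 1 ≤ comps G A + (A.filter (G.Adj v)).card := by
    apply comps_le G hv (A.filter (G.Adj v))
    · intro u hu
      have h := Finset.mem_filter.1 hu
      exact Finset.mem_erase.2 ⟨(G.ne_of_adj h.2).symm, h.1⟩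
    · intro x hx hconn
      exact step G hv (Finset.mem_of_mem_erase hx) (Finset.mem_erase.1 hx).1 hconn
  have hm := msum_erase G hv
  have he1 := msum_eq G A
  have he2 := msum_eq G (A.erase v)
  simp only [deg] at hm
  rw [nu, nu]
  omega

lemma nu_del2 {A : Finset V} {v u w : V} (hv : v ∈ A) (hu : u ∈ A.filter (G.Adj v))
    (hw : w ∈ A.filter (G.Adj v)) (huw : u ≠ w) (hconn : Conn G (A.erase v) u w) :
    nu G (A.erase v) + 2 ≤ nu G A := by
  classical
  set N := (A.filter (G.Adj v)).erase w with hN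
  have hNcard : N.card + 1 = (A.filter (G.Adj v)).card := Finset.card_erase_add_one hw
  have hNsub : ∀ u' ∈ N, u' ∈ A.erase v := by
    intro u' hu'
    have h2 := Finset.mem_filter.1 (Finset.mem_of_mem_erase hu')
    exact Finset.mem_erase.2 ⟨(G.ne_of_adj h2.2).symm, h2.1⟩
  have hcomp : comps G (A.erase v) + 1 ≤ comps G A + N.card := by
    apply comps_le G hv N hNsub
    intro x hx hconnx
    obtain ⟨u', hu', hcu⟩ :=
      step G hv (Finset.mem_of_mem_erase hx) (Finset.mem_erase.1 hx).1 hconnx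
    by_cases h : u' = w
    · subst h
      exact ⟨u, Finset.mem_erase.2 ⟨huw, hu⟩, conn_trans G hcu (conn_symm G hconn)⟩
    · exact ⟨u', Finset.mem_erase.2 ⟨h, hu'⟩, hcu⟩
  have hm := msum_erase G hv
  have he1 := msum_eq G A
  have he2 := msum_eq G (A.erase v)
  simp only [deg] at hm
  rw [nu, nu]
  omega

lemma nu_chain : ∀ (n : ℕ) (A B : Finset V), A.card ≤ n → B ⊆ A →
    nu G B + A.card ≤ nu G A + B.card := by
  intro n
  induction n with
  | zero =>
    intro A B hc hBA
    have hA : A = ∅ := Finset.card_eq_zero.1 (Nat.le_zero.1 hc)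
    subst hA
    have hB : B = ∅ := Finset.subset_empty.1 hBA
    subst hB
    omega
  | succ n ih =>
    intro A B hc hBA
    by_cases h : B = A
    · subst h; omega
    · obtain ⟨v, hvA, hvB⟩ := Finset.exists_of_ssubset (lt_of_le_of_ne hBA h)
      have hB' : B ⊆ A.erase v := Finset.subset_erase.2 ⟨hBA, hvB⟩
      have hce := Finset.card_erase_add_one hvA
      have h1 := ih (A.erase v) B (by omega) hB'
      have h2 := nu_del1 G hvA
      omega

/-! ### Existence of a vertex on a cycle when the minimum degree is at least 2 -/

lemma exists_cycle_vertex {A : Finset V} (hA : A.Nonempty)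
    (hdeg : ∀ x ∈ A, 2 ≤ deg G A x) :
    ∃ v ∈ A, ∃ u w, u ∈ A.filter (G.Adj v) ∧ w ∈ A.filter (G.Adj v) ∧ u ≠ w ∧
      Conn G (A.erase v) u w := by
  classical
  obtain ⟨a, ha⟩ := hA
  set P : ℕ → Prop := fun n => ∃ (x y : V) (p : G.Walk x y),
    p.IsPath ∧ (∀ z ∈ p.support, z ∈ A) ∧ p.length = n with hP
  have hP0 : P 0 := ⟨a, a, SimpleGraph.Walk.nil, by simp, by simp [ha], rfl⟩
  have hbound : ∀ n, P n → n < Fintype.card V := by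
    rintro n ⟨x, y, p, hpath, hsup, rfl⟩
    exact hpath.length_lt
  set L := Nat.findGreatest P (Fintype.card V) with hL
  have hPL : P L := Nat.findGreatest_spec (Nat.zero_le _) hP0
  have hmax : ∀ n, P n → n ≤ L :=
    fun n hn => Nat.le_findGreatest (le_of_lt (hbound n hn)) hn
  obtain ⟨x, y, p, hpath, hsup, hlen⟩ := hPL
  have hxA : x ∈ A := hsup x p.start_mem_support
  have hnbr : ∀ z ∈ A.filter (G.Adj x), z ∈ p.support := by
    intro z hz
    by_contra hzs
    have hzA : z ∈ A := (Finset.mem_filter.1 hz).1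
    have hadj : G.Adj z x := ((Finset.mem_filter.1 hz).2).symm
    have hP1 : P (L + 1) := by
      refine ⟨z, y, SimpleGraph.Walk.cons hadj p, ?_, ?_, by simp [hlen]⟩
      · rw [SimpleGraph.Walk.cons_isPath_iff]
        exact ⟨hpath, hzs⟩
      · intro w hw
        rw [SimpleGraph.Walk.support_cons] at hw
        rcases List.mem_cons.1 hw with rfl | hw
        · exact hzA
        · exact hsup w hw
    have := hmax _ hP1
    omega
  cases p with
  | nil =>
    exfalso
    have h2 := hdeg x hxA
    rw [deg] at h2
    obtain ⟨z, hz⟩ := Finset.card_pos.1 (Nat.lt_of_lt_of_le Nat.zero_lt_two h2)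
    have := hnbr z hz
    rw [SimpleGraph.Walk.support_nil, List.mem_singleton] at this
    subst this
    exact G.irrefl (Finset.mem_filter.1 hz).2
  | cons hadj q =>
    rename_i b
    rw [SimpleGraph.Walk.cons_isPath_iff] at hpath
    have hnbr' : ∀ z ∈ A.filter (G.Adj x), z ∈ q.support := by
      intro z hz
      have := hnbr z hz
      rw [SimpleGraph.Walk.support_cons] at this
      rcases List.mem_cons.1 this with rfl | h
      · exact absurd (Finset.mem_filter.1 hz).2 (G.irrefl)
      · exact h
    obtain ⟨u, hu, w, hw, huw⟩ := Finset.one_lt_card.1 (hdeg x hxA)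
    refine ⟨x, hxA, u, w, hu, hw, huw, ?_⟩
    have hu' := hnbr' u hu
    have hw' := hnbr' w hw
    have hqA : ∀ z ∈ q.support, z ∈ A := by
      intro z hz
      exact hsup z (by rw [SimpleGraph.Walk.support_cons]; exact List.mem_cons_of_mem _ hz)
    refine ⟨(q.takeUntil u hu').reverse.append (q.takeUntil w hw'), ?_⟩
    intro z hz
    rw [SimpleGraph.Walk.support_append] at hz
    have hzq : z ∈ q.support := by
      rcases List.mem_append.1 hz with h | h
      · rw [SimpleGraph.Walk.support_reverse, List.mem_reverse] at h
        exact SimpleGraph.Walk.support_takeUntil_subset _ _ h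
      · exact SimpleGraph.Walk.support_takeUntil_subset _ _ (List.mem_of_mem_tail h)
    exact Finset.mem_erase.2 ⟨fun hzx => hpath.2 (hzx ▸ hzq), hqA z hzq⟩

/-! ### Values at the empty set -/

lemma esum_empty : esum G (∅ : Finset V) = 0 := by
  classical
  rw [esum, Finset.card_eq_zero]
  ext e
  simp only [SimpleGraph.mem_edgeFinset, Finset.notMem_empty, iff_false]
  induction e using Sym2.ind with
  | _ x y => exact fun _ => (by simpa using x.2)

lemma comps_empty : comps G (∅ : Finset V) = 0 := by
  rw [comps]
  haveI h0 : IsEmpty ((↑(∅ : Finset V)) : Set V) := by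
    constructor
    rintro ⟨x, hx⟩
    simp at hx
  haveI : IsEmpty (G.induce ((↑(∅ : Finset V)) : Set V)).ConnectedComponent :=
    ⟨fun C => SimpleGraph.ConnectedComponent.ind (fun v => isEmptyElim v) C⟩
  exact Nat.card_of_isEmpty

lemma nu_empty : nu G (∅ : Finset V) = 0 := by
  rw [nu, esum_empty, comps_empty]

/-! ### The main induction -/

lemma main : ∀ (n : ℕ) (A : Finset V), A.card ≤ n →
    |F G A| * 2 ^ A.card ≤ (2 : ℤ) ^ nu G A := by
  intro n
  induction n with
  | zero =>
    intro A hcard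
    have hA : A = ∅ := Finset.card_eq_zero.1 (Nat.le_zero.1 hcard)
    subst hA
    simp [F_empty, nu_empty]
  | succ n ih =>
    intro A hcard
    rcases Finset.eq_empty_or_nonempty A with rfl | hne
    · simp [F_empty, nu_empty]
    by_cases hiso : ∃ v ∈ A, A.filter (G.Adj v) = ∅
    · obtain ⟨v, hv, hfil⟩ := hiso
      rw [F_isolated G hv hfil]
      simp only [abs_zero, zero_mul]
      positivity
    by_cases hpend : ∃ v ∈ A, ∃ u, A.filter (G.Adj v) = {u}
    · obtain ⟨v, hv, u, hu⟩ := hpend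
      have humem : u ∈ A.filter (G.Adj v) := by rw [hu]; exact Finset.mem_singleton_self u
      have huA : u ∈ A := (Finset.mem_filter.1 humem).1
      set B := (A.erase u).filter (fun w => ¬ G.Adj u w) with hB
      have hFA : F G A = - F G B := F_pendant G hv hu
      have hBsub : B ⊆ A.erase u := Finset.filter_subset _ _
      have hBA : B ⊆ A := hBsub.trans (Finset.erase_subset _ _)
      have hcerase := Finset.card_erase_add_one huA
      have hBcard : B.card ≤ n := by
        have := Finset.card_le_card hBsub
        omega
      have hIH := ih B hBcard
      have hchain := nu_chain G (n + 1) A B hcard hBA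
      have habs : |F G A| = |F G B| := by rw [hFA, abs_neg]
      rw [habs]
      have hpow : ((2 : ℤ)) ^ (nu G B) * 2 ^ A.card ≤ 2 ^ (nu G A) * 2 ^ B.card := by
        rw [← pow_add, ← pow_add]
        exact pow_le_pow_right₀ (by norm_num) hchain
      have h1 : |F G B| * 2 ^ A.card * 2 ^ B.card ≤ (2 : ℤ) ^ nu G A * 2 ^ B.card := by
        calc |F G B| * 2 ^ A.card * 2 ^ B.card
            = (|F G B| * 2 ^ B.card) * 2 ^ A.card := by ring
          _ ≤ (2 : ℤ) ^ nu G B * 2 ^ A.card :=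
              mul_le_mul_of_nonneg_right hIH (by positivity)
          _ ≤ (2 : ℤ) ^ nu G A * 2 ^ B.card := hpow
      exact le_of_mul_le_mul_right h1 (by positivity)
    -- remaining case: every vertex of `A` has at least two neighbours in `A`
    have hdeg : ∀ x ∈ A, 2 ≤ deg G A x := by
      intro x hx
      by_contra hlt
      push_neg at hlt
      have hcase : deg G A x = 0 ∨ deg G A x = 1 := by omega
      rcases hcase with h0 | h1
      · exact hiso ⟨x, hx, Finset.card_eq_zero.1 h0⟩
      · obtain ⟨u, hu⟩ := Finset.card_eq_one.1 h1
        exact hpend ⟨x, hx, u, hu⟩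
    obtain ⟨v, hv, u, w, hu, hw, huw, hconn⟩ := exists_cycle_vertex G hne hdeg
    set A' := A.erase v with hA'
    set B := A'.filter (fun w => ¬ G.Adj v w) with hB
    have hrec : F G A = F G A' - F G B := F_rec G hv
    have hdel2 := nu_del2 G hv hu hw huw hconn
    have hcerase := Finset.card_erase_add_one hv
    rw [← hA'] at hdel2 hcerase
    have hA'card : A'.card ≤ n := by omega
    have hIH1 := ih A' hA'card
    have hBsub : B ⊆ A' := Finset.filter_subset _ _
    have hBcard : B.card ≤ n := le_trans (Finset.card_le_card hBsub) hA'card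
    have hIH2 := ih B hBcard
    have hchain := nu_chain G n A' B hA'card hBsub
    have habs : |F G A| ≤ |F G A'| + |F G B| := by
      rw [hrec]; exact abs_sub _ _
    have hpowA : ((2 : ℤ)) ^ A.card = 2 ^ A'.card * 2 := by
      rw [← pow_succ]
      congr 1
      omega
    have claim1 : |F G A'| * 2 ^ A.card * 2 ≤ (2 : ℤ) ^ nu G A := by
      calc |F G A'| * 2 ^ A.card * 2 = (|F G A'| * 2 ^ A'.card) * 4 := by rw [hpowA]; ring
        _ ≤ (2 : ℤ) ^ nu G A' * 4 := mul_le_mul_of_nonneg_right hIH1 (by norm_num)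
        _ = (2 : ℤ) ^ (nu G A' + 2) := by rw [pow_add]; ring
        _ ≤ (2 : ℤ) ^ nu G A := pow_le_pow_right₀ (by norm_num) hdel2
    have claim2 : |F G B| * 2 ^ A.card * 2 * 2 ^ B.card
        ≤ (2 : ℤ) ^ nu G A * 2 ^ B.card := by
      calc |F G B| * 2 ^ A.card * 2 * 2 ^ B.card
          = (|F G B| * 2 ^ B.card) * (2 ^ A'.card * 4) := by rw [hpowA]; ring
        _ ≤ (2 : ℤ) ^ nu G B * (2 ^ A'.card * 4) :=
            mul_le_mul_of_nonneg_right hIH2 (by positivity)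
        _ = (2 : ℤ) ^ (nu G B + A'.card + 2) := by rw [pow_add, pow_add]; ring
        _ ≤ (2 : ℤ) ^ (nu G A + B.card) := pow_le_pow_right₀ (by norm_num) (by omega)
        _ = (2 : ℤ) ^ nu G A * 2 ^ B.card := pow_add 2 _ _
    have claim2' : |F G B| * 2 ^ A.card * 2 ≤ (2 : ℤ) ^ nu G A :=
      le_of_mul_le_mul_right claim2 (by positivity)
    have final : |F G A| * 2 ^ A.card * 2 ≤ (2 : ℤ) ^ nu G A * 2 := by
      calc |F G A| * 2 ^ A.card * 2 ≤ (|F G A'| + |F G B|) * 2 ^ A.card * 2 := by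
            apply mul_le_mul_of_nonneg_right _ (by norm_num)
            exact mul_le_mul_of_nonneg_right habs (by positivity)
        _ = |F G A'| * 2 ^ A.card * 2 + |F G B| * 2 ^ A.card * 2 := by ring
        _ ≤ (2 : ℤ) ^ nu G A + (2 : ℤ) ^ nu G A := add_le_add claim1 claim2'
        _ = (2 : ℤ) ^ nu G A * 2 := by ring
    exact le_of_mul_le_mul_right final (by norm_num)

/-! ### Globalization -/

lemma esum_univ : esum G (Finset.univ : Finset V) = G.edgeFinset.card := by
  classical
  have h1 := msum_eq G (Finset.univ : Finset V)
  have h2 : msum G (Finset.univ : Finset V) = 2 * G.edgeFinset.card := by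
    rw [msum, ← SimpleGraph.sum_degrees_eq_twice_card_edges]
    apply Finset.sum_congr rfl
    intro u _
    rw [deg, SimpleGraph.degree]
    congr 1
    ext z
    simp [SimpleGraph.mem_neighborFinset]
  omega

lemma comps_univ : comps G (Finset.univ : Finset V) = Fintype.card G.ConnectedComponent := by
  rw [comps, ← Nat.card_eq_fintype_card]
  have : ((Finset.univ : Finset V) : Set V) = Set.univ := Finset.coe_univ
  rw [this]
  exact Nat.card_congr (SimpleGraph.Iso.connectedComponentEquiv (SimpleGraph.induceUnivIso G))

lemma eval_eq : (indepPoly G).eval (-1) = F G (Finset.univ : Finset V) := by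
  classical
  rw [indepPoly, F, Finset.powerset_univ, Polynomial.eval_finset_sum]
  apply Finset.sum_congr
  · ext s
    simp only [Finset.mem_filter, Finset.mem_univ, true_and]
    rfl
  · intro s _
    simp

end Eng

open Classical in
/-- `|I(G;−1)| ≤ 2^{ν(G)}`, where `ν(G) = |E(G)| − |V(G)| + p` is the cyclomatic
number of `G` and `p` is the number of connected components. -/
theorem abs_indepPoly_neg_one_le_two_pow_cyclomaticNumber
    {V : Type*} [Fintype V] (G : SimpleGraph V) (ν : ℕ)
    (hν : (ν : ℤ) = G.edgeFinset.card - Fintype.card V + Fintype.card G.ConnectedComponent) :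
    |(indepPoly G).eval (-1)| ≤ 2 ^ ν := by
  classical
  have hmain := Eng.main G (Fintype.card V) Finset.univ (le_of_eq (Finset.card_univ))
  rw [Finset.card_univ] at hmain
  have hE := Eng.esum_univ G
  have hC := Eng.comps_univ G
  have hnu : Eng.nu G (Finset.univ : Finset V) = ν + Fintype.card V := by
    rw [Eng.nu, hE, hC]
    have : (ν : ℤ) + (Fintype.card V : ℤ)
        = (G.edgeFinset.card : ℤ) + (Fintype.card G.ConnectedComponent : ℤ) := by
      rw [hν]; ring
    exact_mod_cast this.symm
  rw [Eng.eval_eq]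
  rw [hnu, pow_add] at hmain
  exact le_of_mul_le_mul_right hmain (by positivity)
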